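/- Let R be a commutative ring, p ≥ 1 a natural number, and A a function on triples (n,r,m) of integers with n,m ≥ 1 and r² < 4nm, with values in R. Define the pullback coefficients ϖ(A)(n,m) = Σ_{r ∈ ℤ, r² < 4nm} A(n,r,m). Define (V^{(2)}A)(n,r,m) = A(n/p, r/p, m/p) if p divides n, r, m, and 0 otherwise, and define (V×V ϖ(A))(n,m) = ϖ(A)(n/p, m/p) if p ∣ n and p ∣ m, else 0. Then ϖ(V^{(2)}A) = V×V ϖ(A), i.e. for all n, m ≥ 1: Σ_{r² < 4nm} (V^{(2)}A)(n,r,m) equals ϖ(A)(n/p,m/p) if p divides both n and m and 0 otherwise. -/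

import Mathlib

/-- The finite set of integers `r` with `r² < 4nm`. -/
noncomputable def diagSet (n m : ℕ) : Finset ℤ :=
  (Finset.Icc (-(4 * n * m : ℤ)) (4 * n * m)).filter (fun r => r ^ 2 < 4 * n * m)

/-- Pullback-to-the-diagonal coefficients: `ϖ(A)(n,m) = ∑_{r² < 4nm} A(n,r,m)`. -/
noncomputable def pullbackCoef {R : Type*} [CommRing R] (A : ℕ → ℤ → ℕ → R) (n m : ℕ) : R :=
  ∑ r ∈ diagSet n m, A n r m

lemma mem_diagSet {n m : ℕ} {r : ℤ} : r ∈ diagSet n m ↔ r ^ 2 < 4 * n * m := by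
  simp only [diagSet, Finset.mem_filter, Finset.mem_Icc]
  constructor
  · tauto
  · intro h
    have h1 : r ≤ r ^ 2 := by
      rcases lt_or_ge r 1 with h' | h' <;> nlinarith [sq_nonneg r]
    have h2 : -r ≤ r ^ 2 := by
      rcases lt_or_ge r 0 with h' | h' <;> nlinarith [sq_nonneg r]
    exact ⟨⟨by linarith, by linarith⟩, h⟩

theorem stmt_5 {R : Type*} [CommRing R] (p : ℕ) (hp : 1 ≤ p) (A : ℕ → ℤ → ℕ → R) :
    ∀ n m : ℕ, 1 ≤ n → 1 ≤ m →
      (∑ r ∈ diagSet n m,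
          (if p ∣ n ∧ (p : ℤ) ∣ r ∧ p ∣ m then A (n / p) (r / p) (m / p) else 0))
        = if p ∣ n ∧ p ∣ m then pullbackCoef A (n / p) (m / p) else 0 := by
  intro n m hn hm
  have hp0 : (0:ℤ) < (p:ℤ) := by exact_mod_cast hp
  by_cases hnm : p ∣ n ∧ p ∣ m
  · obtain ⟨hpn, hpm⟩ := hnm
    rw [if_pos ⟨hpn, hpm⟩, pullbackCoef]
    have hcong : ∀ r ∈ diagSet n m,
        (if p ∣ n ∧ (p : ℤ) ∣ r ∧ p ∣ m then A (n / p) (r / p) (m / p) else 0)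
          = if (p : ℤ) ∣ r then A (n / p) (r / p) (m / p) else 0 := by
      intro r _
      by_cases hr : (p:ℤ) ∣ r
      · rw [if_pos ⟨hpn, hr, hpm⟩, if_pos hr]
      · rw [if_neg (by tauto), if_neg hr]
    rw [Finset.sum_congr rfl hcong, ← Finset.sum_filter]
    obtain ⟨a, ha⟩ := hpn
    obtain ⟨b, hb⟩ := hpm
    have hna : n / p = a := by rw [ha]; exact Nat.mul_div_cancel_left a hp
    have hmb : m / p = b := by rw [hb]; exact Nat.mul_div_cancel_left b hp
    rw [hna, hmb]
    refine Finset.sum_nbij' (fun r => r / (p:ℤ)) (fun s => (p:ℤ) * s) ?_ ?_ ?_ ?_ ?_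
    · intro r hr
      simp only [Finset.mem_filter] at hr
      obtain ⟨hr1, hr2⟩ := hr
      obtain ⟨t, ht⟩ := hr2
      rw [mem_diagSet] at hr1 ⊢
      subst ht
      simp only [Int.mul_ediv_cancel_left _ (ne_of_gt hp0)]
      have : ((p:ℤ) * t) ^ 2 < 4 * (p * a) * (p * b) := by
        rw [ha, hb] at hr1; exact_mod_cast hr1
      have h2 : (p:ℤ)^2 * t^2 < (p:ℤ)^2 * (4*a*b) := by nlinarith [this]
      exact lt_of_mul_lt_mul_left (by linarith [h2]) (sq_nonneg (p:ℤ))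
    · intro s hs
      rw [mem_diagSet] at hs
      simp only [Finset.mem_filter]
      constructor
      · rw [mem_diagSet, ha, hb]
        push_cast
        nlinarith
      · exact Dvd.intro s rfl
    · intro r hr
      simp only [Finset.mem_filter] at hr
      exact Int.mul_ediv_cancel' hr.2
    · intro s _
      exact Int.mul_ediv_cancel_left _ (ne_of_gt hp0)
    · intro r _
      rfl
  · rw [if_neg hnm]
    refine Finset.sum_eq_zero fun r _ => ?_
    rw [if_neg (by tauto)]
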